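/- For probability measures P ≪ Q, the supremum over bounded measurable functions T of E_P[T] − log E_Q[exp(T)] equals D_KL(P‖Q). -/

import Mathlib

open MeasureTheory Real Filter Topology

/-- Upper bound: any Donsker–Varadhan value is at most the KL divergence. -/
lemma dv_upper {Ω : Type*} [MeasurableSpace Ω] (P Q : Measure Ω)
    [IsProbabilityMeasure P] [IsProbabilityMeasure Q] (hPQ : P ≪ Q)
    (hKL : Integrable (fun ω => Real.log ((P.rnDeriv Q ω).toReal)) P)
    (T : Ω → ℝ) (hT : Measurable T) (C : ℝ) (hC : ∀ ω, |T ω| ≤ C) :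
    (∫ ω, T ω ∂P) - Real.log (∫ ω, Real.exp (T ω) ∂Q) ≤
      ∫ ω, Real.log ((P.rnDeriv Q ω).toReal) ∂P := by
  set f : Ω → ℝ := fun ω => (P.rnDeriv Q ω).toReal with hf_def
  set L : Ω → ℝ := fun ω => Real.log (f ω) with hL_def
  have hf_meas : Measurable f := (Measure.measurable_rnDeriv P Q).ennreal_toReal
  have hL_meas : Measurable L := hf_meas.log
  have hf_nonneg : ∀ ω, 0 ≤ f ω := fun ω => ENNReal.toReal_nonneg
  have hTint : Integrable T P := by
    refine (integrable_const C).mono' hT.aestronglyMeasurable ?_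
    exact ae_of_all _ fun ω => by simpa using hC ω
  have hexpTQ : Integrable (fun ω => Real.exp (T ω)) Q := by
    refine (integrable_const (Real.exp C)).mono' (hT.exp).aestronglyMeasurable ?_
    refine ae_of_all _ fun ω => ?_
    rw [Real.norm_eq_abs, abs_of_pos (Real.exp_pos _)]
    exact Real.exp_le_exp.2 ((le_abs_self _).trans (hC ω))
  have hpos : 0 < ∫ ω, Real.exp (T ω) ∂Q := integral_exp_pos hexpTQ
  set g : Ω → ℝ := fun ω => T ω - L ω with hg_def
  have hg_meas : Measurable g := hT.sub hL_meas
  have hgint : Integrable g P := hTint.sub hKL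
  have hkey : ∀ ω, f ω * Real.exp (g ω) ≤ Real.exp (T ω) := by
    intro ω
    rcases eq_or_lt_of_le (hf_nonneg ω) with h0 | h0
    · rw [← h0, zero_mul]; exact (Real.exp_pos _).le
    · have : Real.exp (g ω) = Real.exp (T ω) / f ω := by
        rw [hg_def]
        simp only [Real.exp_sub, hL_def, Real.exp_log h0]
      rw [this, mul_div_cancel₀ _ h0.ne']
  have hfg_nonneg : ∀ ω, 0 ≤ f ω * Real.exp (g ω) :=
    fun ω => mul_nonneg (hf_nonneg ω) (Real.exp_pos _).le
  have hfgQ : Integrable (fun ω => f ω * Real.exp (g ω)) Q := by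
    refine (integrable_const (Real.exp C)).mono'
      (hf_meas.mul hg_meas.exp).aestronglyMeasurable ?_
    refine ae_of_all _ fun ω => ?_
    rw [Real.norm_eq_abs, abs_of_nonneg (hfg_nonneg ω)]
    exact (hkey ω).trans (Real.exp_le_exp.2 ((le_abs_self _).trans (hC ω)))
  have hexpgP : Integrable (fun ω => Real.exp (g ω)) P := by
    refine (integrable_rnDeriv_smul_iff hPQ).mp ?_
    simpa only [smul_eq_mul] using hfgQ
  have hle : ∫ ω, Real.exp (g ω) ∂P ≤ ∫ ω, Real.exp (T ω) ∂Q := by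
    rw [← integral_rnDeriv_smul hPQ]
    simp only [smul_eq_mul]
    exact integral_mono hfgQ hexpTQ hkey
  have hjensen : Real.exp (∫ ω, g ω ∂P) ≤ ∫ ω, Real.exp (g ω) ∂P :=
    (convexOn_exp).map_integral_le (continuous_exp.continuousOn)
      isClosed_univ (ae_of_all _ fun ω => Set.mem_univ (g ω)) hgint hexpgP
  have h1 : ∫ ω, g ω ∂P ≤ Real.log (∫ ω, Real.exp (T ω) ∂Q) :=
    (Real.le_log_iff_exp_le hpos).mpr (hjensen.trans hle)
  have h2 : ∫ ω, g ω ∂P = (∫ ω, T ω ∂P) - ∫ ω, L ω ∂P := integral_sub hTint hKL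
  rw [h2] at h1
  linarith

/-- Donsker–Varadhan representation. -/
theorem stmt_1 {Ω : Type*} [MeasurableSpace Ω] (P Q : Measure Ω)
    [IsProbabilityMeasure P] [IsProbabilityMeasure Q] (hPQ : P ≪ Q)
    (hKL : Integrable (fun ω => Real.log ((P.rnDeriv Q ω).toReal)) P) :
    sSup {v : ℝ | ∃ T : Ω → ℝ, Measurable T ∧ (∃ C : ℝ, ∀ ω, |T ω| ≤ C) ∧
        v = (∫ ω, T ω ∂P) - Real.log (∫ ω, Real.exp (T ω) ∂Q)} =
      ∫ ω, Real.log ((P.rnDeriv Q ω).toReal) ∂P := by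
  set f : Ω → ℝ := fun ω => (P.rnDeriv Q ω).toReal with hf_def
  set L : Ω → ℝ := fun ω => Real.log (f ω) with hL_def
  set S : Set ℝ := {v : ℝ | ∃ T : Ω → ℝ, Measurable T ∧ (∃ C : ℝ, ∀ ω, |T ω| ≤ C) ∧
        v = (∫ ω, T ω ∂P) - Real.log (∫ ω, Real.exp (T ω) ∂Q)} with hS_def
  set KL : ℝ := ∫ ω, L ω ∂P with hKL_def
  have hf_meas : Measurable f := (Measure.measurable_rnDeriv P Q).ennreal_toReal
  have hL_meas : Measurable L := hf_meas.log
  have hf_nonneg : ∀ ω, 0 ≤ f ω := fun ω => ENNReal.toReal_nonneg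
  -- the set is nonempty
  have mem0 : (0:ℝ) ∈ S := by
    refine ⟨fun _ => 0, measurable_const, ⟨0, fun ω => by simp⟩, ?_⟩
    simp
  -- bounded above
  have hbdd : BddAbove S := by
    refine ⟨KL, fun v hv => ?_⟩
    obtain ⟨T, hT, ⟨C, hC⟩, rfl⟩ := hv
    exact dv_upper P Q hPQ hKL T hT C hC
  -- upper bound for the sup
  have hupper : sSup S ≤ KL := by
    refine csSup_le ⟨0, mem0⟩ fun v hv => ?_
    obtain ⟨T, hT, ⟨C, hC⟩, rfl⟩ := hv
    exact dv_upper P Q hPQ hKL T hT C hC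
  -- the truncated functions
  set Tn : ℕ → Ω → ℝ := fun n ω =>
    if f ω = 0 then -(n:ℝ) else max (-(n:ℝ)) (min (L ω) (n:ℝ)) with hTn_def
  have hTn_meas : ∀ n, Measurable (Tn n) := fun n =>
    Measurable.ite (hf_meas (measurableSet_singleton 0)) measurable_const
      (measurable_const.max (hL_meas.min measurable_const))
  have hn_nonneg : ∀ n : ℕ, (0:ℝ) ≤ (n:ℝ) := fun n => Nat.cast_nonneg n
  have hTn_bdd : ∀ n ω, |Tn n ω| ≤ (n:ℝ) := by
    intro n ω
    simp only [hTn_def]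
    by_cases h0 : f ω = 0
    · rw [if_pos h0, abs_neg, abs_of_nonneg (hn_nonneg n)]
    · rw [if_neg h0]
      rw [abs_le]
      constructor
      · exact le_max_left _ _
      · exact max_le (neg_nonpos.2 (hn_nonneg n) |>.trans (hn_nonneg n)) (min_le_right _ _)
  -- a.e. positivity of f under P
  have hae : ∀ᵐ ω ∂P, 0 < f ω := by
    filter_upwards [Measure.rnDeriv_pos hPQ, hPQ.ae_le (Measure.rnDeriv_lt_top P Q)]
      with ω h1 h2
    exact ENNReal.toReal_pos h1.ne' h2.ne
  -- first convergence: ∫ Tn dP → KL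
  have tendsto1 : Tendsto (fun n => ∫ ω, Tn n ω ∂P) atTop (𝓝 KL) := by
    rw [hKL_def]
    refine tendsto_integral_of_dominated_convergence (fun ω => |L ω|)
      (fun n => (hTn_meas n).aestronglyMeasurable) hKL.abs ?_ ?_
    · intro n
      filter_upwards [hae] with ω hω
      simp only [hTn_def, Real.norm_eq_abs]
      rw [if_neg hω.ne']
      rw [abs_le]
      constructor
      · refine le_trans (le_min (neg_abs_le _) ?_) (le_max_right _ _)
        exact neg_nonpos.2 (abs_nonneg _) |>.trans (hn_nonneg n)
      · exact max_le ((neg_nonpos.2 (hn_nonneg n)).trans (abs_nonneg _))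
          ((min_le_left _ _).trans (le_abs_self _))
    · filter_upwards [hae] with ω hω
      refine tendsto_const_nhds.congr' ?_
      filter_upwards [eventually_ge_atTop ⌈|L ω|⌉₊] with n hn
      have hln : |L ω| ≤ (n:ℝ) := (Nat.le_ceil _).trans (Nat.cast_le.2 hn)
      simp only [hTn_def]
      rw [if_neg hω.ne', min_eq_left ((le_abs_self _).trans hln),
        max_eq_right (le_trans (neg_le_neg hln) (neg_abs_le _))]
  -- second convergence: ∫ exp (Tn) dQ → 1
  have hfQ : Integrable f Q := Measure.integrable_toReal_rnDeriv
  have hfint1 : ∫ ω, f ω ∂Q = 1 := by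
    rw [hf_def, Measure.integral_toReal_rnDeriv hPQ]
    simp
  have tendsto2 : Tendsto (fun n => ∫ ω, Real.exp (Tn n ω) ∂Q) atTop (𝓝 1) := by
    rw [← hfint1]
    refine tendsto_integral_of_dominated_convergence (fun ω => max (f ω) 1)
      (fun n => ((hTn_meas n).exp).aestronglyMeasurable) ?_ ?_ ?_
    · refine (hfQ.add (integrable_const 1)).mono'
        (hf_meas.max measurable_const).aestronglyMeasurable ?_
      refine ae_of_all _ fun ω => ?_
      rw [Real.norm_eq_abs, abs_of_nonneg (le_max_of_le_right zero_le_one)]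
      exact max_le (le_add_of_nonneg_right zero_le_one) (le_add_of_nonneg_left (hf_nonneg ω))
    · intro n
      refine ae_of_all _ fun ω => ?_
      simp only [hTn_def, Real.norm_eq_abs]
      rw [abs_of_pos (Real.exp_pos _)]
      by_cases h0 : f ω = 0
      · rw [if_pos h0]
        calc Real.exp (-(n:ℝ)) ≤ Real.exp 0 := Real.exp_le_exp.2 (neg_nonpos.2 (hn_nonneg n))
        _ = 1 := Real.exp_zero
        _ ≤ max (f ω) 1 := le_max_right _ _
      · rw [if_neg h0]
        have hfpos : 0 < f ω := lt_of_le_of_ne (hf_nonneg ω) (Ne.symm h0)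
        calc Real.exp (max (-(n:ℝ)) (min (L ω) (n:ℝ)))
            ≤ Real.exp (max 0 (L ω)) :=
              Real.exp_le_exp.2 (max_le_max (neg_nonpos.2 (hn_nonneg n)) (min_le_left _ _))
          _ = max 1 (f ω) := by
              rw [Real.exp_monotone.map_max, Real.exp_zero, hL_def, Real.exp_log hfpos]
          _ = max (f ω) 1 := max_comm _ _
    · refine ae_of_all _ fun ω => ?_
      by_cases h0 : f ω = 0
      · have : (fun n : ℕ => Real.exp (Tn n ω)) = fun n : ℕ => Real.exp (-(n:ℝ)) := by
          funext n; simp only [hTn_def]; rw [if_pos h0]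
        rw [this, h0]
        exact Real.tendsto_exp_atBot.comp
          (tendsto_neg_atBot_iff.mpr tendsto_natCast_atTop_atTop)
      · have hfpos : 0 < f ω := lt_of_le_of_ne (hf_nonneg ω) (Ne.symm h0)
        refine tendsto_const_nhds.congr' ?_
        filter_upwards [eventually_ge_atTop ⌈|L ω|⌉₊] with n hn
        have hln : |L ω| ≤ (n:ℝ) := (Nat.le_ceil _).trans (Nat.cast_le.2 hn)
        simp only [hTn_def]
        rw [if_neg h0, min_eq_left ((le_abs_self _).trans hln),
          max_eq_right (le_trans (neg_le_neg hln) (neg_abs_le _)), hL_def,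
          Real.exp_log hfpos]
  -- log of second convergence
  have tendsto3 : Tendsto (fun n => Real.log (∫ ω, Real.exp (Tn n ω) ∂Q)) atTop (𝓝 0) := by
    have := (Real.continuousAt_log one_ne_zero).tendsto.comp tendsto2
    simpa [Function.comp_def] using this
  have tendstoV : Tendsto (fun n => (∫ ω, Tn n ω ∂P) -
      Real.log (∫ ω, Real.exp (Tn n ω) ∂Q)) atTop (𝓝 KL) := by
    simpa using tendsto1.sub tendsto3
  have hlower : KL ≤ sSup S := by
    refine le_of_tendsto' tendstoV fun n => ?_
    exact le_csSup hbdd ⟨Tn n, hTn_meas n, ⟨(n:ℝ), hTn_bdd n⟩, rfl⟩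
  exact le_antisymm hupper hlower
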